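/- Let F be a field of characteristic ≠ 2, let d ∈ F with d ≠ 1, and let (x, y) ∈ F × F satisfy x² + y² = 1 + d·x²·y² with x ≠ −1 and y ≠ 0. Put u = (x − 1)/(x + 1) and v = 2u/y. Then v² = (d − 1)·u³ + 2(d + 1)·u² + (d − 1)·u, i.e. (u, v) lies on the Montgomery-form curve birationally equivalent to the Edwards curve. -/

import Mathlib

theorem stmt12 (F : Type*) [Field F] (hchar : ringChar F ≠ 2) (d : F) (hd1 : d ≠ 1)
    (x y : F) (hxy : x ^ 2 + y ^ 2 = 1 + d * x ^ 2 * y ^ 2)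
    (hx : x ≠ -1) (hy : y ≠ 0) :
    (2 * ((x - 1) / (x + 1)) / y) ^ 2 =
      (d - 1) * ((x - 1) / (x + 1)) ^ 3 + 2 * (d + 1) * ((x - 1) / (x + 1)) ^ 2
        + (d - 1) * ((x - 1) / (x + 1)) := by
  have hx1 : x + 1 ≠ 0 := fun h => hx (by linear_combination h)
  field_simp
  ring_nf
  linear_combination (4 * (x - 1)) * hxy
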